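/- Let G be a graph and Ω a potential maximal clique of G. Then every block associated with Ω is a full block of G; in particular, for every connected component C of G − Ω, the set N(C) is a minimal separator of G and N(C) is the full neighborhood of C. -/

import Mathlib

open scoped Classical

/-- Data of a (finite) tree decomposition: an index type, a graph on it, and bags. -/
structure TDData (V : Type) where
  ι : Type
  fin : Fintype ι
  tree : SimpleGraph ι
  bag : ι → Finset V

/-- `D` is a tree decomposition of the graph `G`. -/
def IsGraphTD {V : Type} (G : SimpleGraph V) (D : TDData V) : Prop :=
  D.tree.IsTree ∧
  (∀ v : V, ∃ t, v ∈ D.bag t) ∧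
  (∀ u v : V, G.Adj u v → ∃ t, u ∈ D.bag t ∧ v ∈ D.bag t) ∧
  (∀ v : V, (D.tree.induce {t | v ∈ D.bag t}).Connected)

/-- `D` is a tree decomposition of the hypergraph with edge family `E`. -/
def IsHyperTD {V : Type} (E : Finset (Finset V)) (D : TDData V) : Prop :=
  D.tree.IsTree ∧
  (∀ v : V, ∃ t, v ∈ D.bag t) ∧
  (∀ e ∈ E, ∃ t, e ⊆ D.bag t) ∧
  (∀ v : V, (D.tree.induce {t | v ∈ D.bag t}).Connected)

/-- A monotone width function. -/
def MonoWidth {V : Type} (f : Finset V → NNReal) : Prop :=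
  ∀ X Y : Finset V, X ⊆ Y → f X ≤ f Y

/-- The `f`-width of a tree decomposition: the supremum of `f` over its bags. -/
noncomputable def tdWidth {V : Type} (f : Finset V → NNReal) (D : TDData V) : NNReal :=
  ⨆ t : D.ι, f (D.bag t)

/-- The `f`-tree-width of a graph. -/
noncomputable def ftw {V : Type} (G : SimpleGraph V) (f : Finset V → NNReal) : NNReal :=
  ⨅ D : {D : TDData V // IsGraphTD G D}, tdWidth f D.1

/-- The `f`-hypertree-width of a hypergraph. -/
noncomputable def fhtw {V : Type} (E : Finset (Finset V)) (f : Finset V → NNReal) : NNReal :=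
  ⨅ D : {D : TDData V // IsHyperTD E D}, tdWidth f D.1

/-- The `f`-clique-number of a graph. -/
noncomputable def fCliqueNum {V : Type} (G : SimpleGraph V) (f : Finset V → NNReal) : NNReal :=
  ⨆ Ω : {Ω : Finset V // G.IsClique (Ω : Set V)}, f Ω.1

/-- The Gaifman (primal) graph of a hypergraph. -/
def gaifman {V : Type} (E : Finset (Finset V)) : SimpleGraph V :=
  SimpleGraph.fromRel fun u v => ∃ e ∈ E, u ∈ e ∧ v ∈ e

/-- A graph is chordal if every cycle of length at least 4 has a chord. -/
def IsChordal {V : Type} (G : SimpleGraph V) : Prop :=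
  ∀ (v : V) (p : G.Walk v v), p.IsCycle → 4 ≤ p.length →
    ∃ u w : V, u ∈ p.support ∧ w ∈ p.support ∧ G.Adj u w ∧ s(u, w) ∉ p.edges

/-- `I` is a triangulation of `G`: a chordal supergraph on the same vertex set. -/
def IsTriangulation {V : Type} (G I : SimpleGraph V) : Prop :=
  G ≤ I ∧ IsChordal I

/-- `I` is a minimal triangulation of `G`. -/
def IsMinTriang {V : Type} (G I : SimpleGraph V) : Prop :=
  IsTriangulation G I ∧ ∀ I' : SimpleGraph V, IsTriangulation G I' → I' ≤ I → I' = I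

/-- A maximal clique of `G` (as a finset). -/
def IsMaxClique {V : Type} (G : SimpleGraph V) (Ω : Finset V) : Prop :=
  G.IsClique (Ω : Set V) ∧ ∀ Ω' : Finset V, G.IsClique (Ω' : Set V) → Ω ⊆ Ω' → Ω = Ω'

/-- A potential maximal clique: a maximal clique of some minimal triangulation. -/
def IsPMC {V : Type} (G : SimpleGraph V) (Ω : Finset V) : Prop :=
  ∃ I : SimpleGraph V, IsMinTriang G I ∧ IsMaxClique I Ω

/-- `u` and `v` are joined by a walk avoiding `S`. -/
def ReachAvoid {V : Type} (G : SimpleGraph V) (S : Finset V) (u v : V) : Prop :=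
  ∃ p : G.Walk u v, ∀ x ∈ p.support, x ∉ S

/-- `S` is a `u,v`-separator of `G`. -/
def IsUVSep {V : Type} (G : SimpleGraph V) (u v : V) (S : Finset V) : Prop :=
  u ∉ S ∧ v ∉ S ∧ ¬ ReachAvoid G S u v

/-- `S` is a minimal separator of `G`: a minimal `u,v`-separator for some
non-adjacent pair of distinct vertices `u,v`. -/
def IsMinSep {V : Type} (G : SimpleGraph V) (S : Finset V) : Prop :=
  ∃ u v : V, u ≠ v ∧ ¬ G.Adj u v ∧ IsUVSep G u v S ∧ ∀ S' ⊂ S, ¬ IsUVSep G u v S'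

/-- An inclusion-minimal separator: a minimal separator not properly containing
another minimal separator. -/
def IsInclMinSep {V : Type} (G : SimpleGraph V) (S : Finset V) : Prop :=
  IsMinSep G S ∧ ∀ S' : Finset V, IsMinSep G S' → S' ⊆ S → S' = S

/-- `C` is (the vertex set of) a connected component of `G - S`. -/
def IsCompAvoid {V : Type} (G : SimpleGraph V) (S C : Finset V) : Prop :=
  C.Nonempty ∧ (∀ x ∈ C, x ∉ S) ∧
  (∀ x ∈ C, ∀ y ∈ C, ReachAvoid G S x y) ∧
  (∀ x ∈ C, ∀ y : V, y ∉ S → ReachAvoid G S x y → y ∈ C)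

/-- The neighborhood of a set `C` of vertices, as a set. -/
def nbhdSet {V : Type} (G : SimpleGraph V) (C : Finset V) : Set V :=
  {v | v ∉ C ∧ ∃ u ∈ C, G.Adj u v}

/-- The neighborhood of a set `C` of vertices, as a finset. -/
noncomputable def nbhd {V : Type} [Fintype V] [DecidableEq V]
    (G : SimpleGraph V) (C : Finset V) : Finset V :=
  Finset.univ.filter fun v => v ∉ C ∧ ∃ u ∈ C, G.Adj u v

/-- The realization `R(S,C)` of a block: the graph on `S ∪ C` induced from `G`
with `S` turned into a clique (viewed as a graph on `V` with no edges outside `S ∪ C`). -/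
def real {V : Type} [DecidableEq V] (G : SimpleGraph V) (S C : Finset V) : SimpleGraph V :=
  SimpleGraph.fromRel fun u v =>
    (u ∈ S ∪ C ∧ v ∈ S ∪ C) ∧ (G.Adj u v ∨ (u ∈ S ∧ v ∈ S))

/-- The subgraph of `I` induced by a finset `W`, viewed as a graph on `V`. -/
def restrict {V : Type} (I : SimpleGraph V) (W : Finset V) : SimpleGraph V :=
  SimpleGraph.fromRel fun u v => u ∈ W ∧ v ∈ W ∧ I.Adj u v

/-- `(S,C)` is a full block of `G`. -/
def FullBlock {V : Type} (G : SimpleGraph V) (S C : Finset V) : Prop :=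
  IsMinSep G S ∧ IsCompAvoid G S C ∧ nbhdSet G C = (S : Set V)


/-! ### Auxiliary lemmas -/

section Aux

open SimpleGraph

variable {V : Type} {G H : SimpleGraph V} {S S' : Finset V} {x y z : V}

lemma reach_refl (hx : x ∉ S) : ReachAvoid G S x x :=
  ⟨Walk.nil, by
    intro z hz
    simp only [Walk.support_nil, List.mem_singleton] at hz
    subst hz; exact hx⟩

lemma reach_symm (h : ReachAvoid G S x y) : ReachAvoid G S y x := by
  obtain ⟨p, hp⟩ := h
  exact ⟨p.reverse, fun z hz => hp z (by rwa [Walk.support_reverse, List.mem_reverse] at hz)⟩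

lemma reach_trans (h1 : ReachAvoid G S x y) (h2 : ReachAvoid G S y z) : ReachAvoid G S x z := by
  obtain ⟨p, hp⟩ := h1
  obtain ⟨q, hq⟩ := h2
  refine ⟨p.append q, fun w hw => ?_⟩
  rcases (Walk.mem_support_append_iff _ _).mp hw with h | h
  exacts [hp _ h, hq _ h]

lemma reach_adj (h : G.Adj x y) (hx : x ∉ S) (hy : y ∉ S) : ReachAvoid G S x y :=
  ⟨Walk.cons h Walk.nil, by
    intro z hz
    simp only [Walk.support_cons, Walk.support_nil, List.mem_cons, List.mem_singleton,
      List.not_mem_nil, or_false] at hz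
    rcases hz with rfl | rfl
    exacts [hx, hy]⟩

lemma reach_mono (hs : S' ⊆ S) (h : ReachAvoid G S x y) : ReachAvoid G S' x y := by
  obtain ⟨p, hp⟩ := h
  exact ⟨p, fun z hz hz' => hp z hz (hs hz')⟩

lemma reach_le (hle : G ≤ H) (h : ReachAvoid G S x y) : ReachAvoid H S x y := by
  obtain ⟨p, hp⟩ := h
  refine ⟨p.transfer H (fun e he => edgeSet_mono hle (p.edges_subset_edgeSet he)), ?_⟩
  intro z hz
  rw [Walk.support_transfer] at hz
  exact hp z hz

/-- If `z` occurs in both halves of an appended walk whose full support has no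
duplicates, then `z` is the junction vertex. -/
lemma eq_of_mem_both_support {a b c : V} {p : G.Walk a b} {q : G.Walk b c}
    (h : (p.append q).support.Nodup) (hzp : z ∈ p.support) (hzq : z ∈ q.support) : z = b := by
  by_contra hzb
  have hzq' : z ∈ q.support.tail := by
    rw [q.support_eq_cons] at hzq
    rcases List.mem_cons.mp hzq with rfl | h'
    · exact absurd rfl hzb
    · exact h'
  rw [Walk.support_append, List.nodup_append] at h
  exact h.2.2 z hzp z hzq' rfl

/-- If `z` occurs in both halves of an appended walk whose support-tail has no
duplicates, then `z` is one of the two junction vertices. -/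
lemma eq_or_eq_of_mem_both_support {a b c : V} {p : G.Walk a b} {q : G.Walk b c}
    (h : (p.append q).support.tail.Nodup) (hzp : z ∈ p.support) (hzq : z ∈ q.support) :
    z = a ∨ z = b := by
  by_contra hz
  push_neg at hz
  have hzp' : z ∈ p.support.tail := by
    rw [p.support_eq_cons] at hzp
    rcases List.mem_cons.mp hzp with rfl | h'
    · exact absurd rfl hz.1
    · exact h'
  have hzq' : z ∈ q.support.tail := by
    rw [q.support_eq_cons] at hzq
    rcases List.mem_cons.mp hzq with rfl | h'
    · exact absurd rfl hz.2
    · exact h'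
  rw [Walk.support_append, p.support_eq_cons, List.cons_append, List.tail_cons,
    List.nodup_append] at h
  exact h.2.2 z hzp' z hzq' rfl

lemma edge_mem_of_length_one {p : G.Walk x y} (h : p.length = 1) : s(x, y) ∈ p.edges := by
  cases p with
  | nil => simp at h
  | cons hadj q =>
    rw [Walk.length_cons, Nat.add_eq_right] at h
    have := q.eq_of_length_eq_zero h
    subst this
    simp

lemma mem_tail_of_mem_support_closed {p : G.Walk x x} (hnn : ¬p.Nil) (hz : z ∈ p.support) :
    z ∈ p.support.tail := by
  cases p with
  | nil => exact absurd SimpleGraph.Walk.Nil.nil hnn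
  | cons hadj q =>
    rw [Walk.support_cons, List.tail_cons]
    rcases List.mem_cons.mp ((Walk.support_cons hadj q) ▸ hz) with rfl | h'
    · exact q.end_mem_support
    · exact h'

lemma length_rotate [DecidableEq V] {p : G.Walk x x} (h : y ∈ p.support) : (p.rotate y h).length = p.length := by
  have hsp := congrArg Walk.length (p.take_spec h)
  rw [Walk.length_append] at hsp
  rw [Walk.rotate, Walk.length_append]
  omega

lemma mem_support_rotate_iff [DecidableEq V] {p : G.Walk x x} (hnn : ¬p.Nil) (h : y ∈ p.support) :
    z ∈ (p.rotate y h).support ↔ z ∈ p.support := by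
  have hnn' : ¬(p.rotate y h).Nil := by
    rw [Walk.nil_iff_length_eq, length_rotate]
    rwa [Walk.nil_iff_length_eq] at hnn
  constructor
  · intro hz
    have := mem_tail_of_mem_support_closed hnn' hz
    rw [(Walk.support_rotate p y h).mem_iff] at this
    rw [p.support_eq_cons]
    exact List.mem_cons_of_mem _ this
  · intro hz
    have := mem_tail_of_mem_support_closed hnn hz
    rw [← (Walk.support_rotate p y h).mem_iff] at this
    rw [(p.rotate y h).support_eq_cons]
    exact List.mem_cons_of_mem _ this

/-- If `z` occurs in `p.takeUntil t` and `z ≠ t`, then the walk `p.takeUntil z` is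
strictly shorter than `p.takeUntil t`. -/
lemma length_takeUntil_lt_of_mem [DecidableEq V] :
    ∀ {v w : V} (p : G.Walk v w) (t : V) (ht : t ∈ p.support) (z : V)
      (hz : z ∈ (p.takeUntil t ht).support) (hzt : z ≠ t) (hzp : z ∈ p.support),
      (p.takeUntil z hzp).length < (p.takeUntil t ht).length := by
  intro v w p
  induction p with
  | nil =>
    intro t ht z hz hzt hzp
    simp only [Walk.support_nil, List.mem_singleton] at ht hzp
    exact absurd (hzp.trans ht.symm) hzt
  | @cons a b c hadj q ih =>
    intro t ht z hz hzt hzp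
    by_cases hat : a = t
    · exfalso
      have hnil : (Walk.cons hadj q).takeUntil t ht = (Walk.nil : G.Walk a a).copy rfl hat := by
        subst hat
        simp [Walk.takeUntil]
      rw [hnil] at hz
      simp only [Walk.support_copy, Walk.support_nil, List.mem_singleton] at hz
      exact hzt (hz.trans hat)
    · have htq : t ∈ q.support := by
        rcases List.mem_cons.mp ((Walk.support_cons hadj q) ▸ ht) with rfl | h'
        · exact absurd rfl hat
        · exact h'
      have hstep : (Walk.cons hadj q).takeUntil t ht = Walk.cons hadj (q.takeUntil t htq) := by
        simp [Walk.takeUntil, hat]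
      have hRlen : ((Walk.cons hadj q).takeUntil t ht).length
          = (q.takeUntil t htq).length + 1 := by
        rw [hstep, Walk.length_cons]
      by_cases haz : a = z
      · have hLnil : (Walk.cons hadj q).takeUntil z hzp = (Walk.nil : G.Walk a a).copy rfl haz := by
          subst haz
          simp [Walk.takeUntil]
        have : ((Walk.cons hadj q).takeUntil z hzp).length = 0 := by
          rw [hLnil]
          simp
        omega
      · have hzq : z ∈ q.support := by
          rcases List.mem_cons.mp ((Walk.support_cons hadj q) ▸ hzp) with rfl | h'
          · exact absurd rfl haz
          · exact h'
        have hstepz : (Walk.cons hadj q).takeUntil z hzp = Walk.cons hadj (q.takeUntil z hzq) := by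
          simp [Walk.takeUntil, haz]
        have hLlen : ((Walk.cons hadj q).takeUntil z hzp).length
            = (q.takeUntil z hzq).length + 1 := by
          rw [hstepz, Walk.length_cons]
        have hzQ : z ∈ (q.takeUntil t htq).support := by
          rw [hstep] at hz
          rcases List.mem_cons.mp ((Walk.support_cons _ _) ▸ hz) with rfl | h'
          · exact absurd rfl haz
          · exact h'
        have := ih t htq z hzQ hzt hzq
        omega

/-- The graph `H` with all edges between `A` and `B` removed. -/
def cutG {V : Type} (H : SimpleGraph V) (A B : Set V) : SimpleGraph V where
  Adj x y := H.Adj x y ∧ ¬(x ∈ A ∧ y ∈ B) ∧ ¬(x ∈ B ∧ y ∈ A)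
  symm := ⟨fun x y h => ⟨h.1.symm, fun hc => h.2.2 ⟨hc.2, hc.1⟩, fun hc => h.2.1 ⟨hc.2, hc.1⟩⟩⟩
  loopless := ⟨fun x h => H.loopless.irrefl x h.1⟩

lemma cutG_adj {A B : Set V} :
    (cutG H A B).Adj x y ↔ H.Adj x y ∧ ¬(x ∈ A ∧ y ∈ B) ∧ ¬(x ∈ B ∧ y ∈ A) := Iff.rfl

/-- Key minimality lemma: if `Ω` is a clique of a minimal triangulation `H` of `G`,
then any two non-adjacent vertices of `Ω` can be joined in `G` by a walk whose
internal vertices avoid `Ω`. -/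
lemma cliquish {V : Type} [DecidableEq V] {G H : SimpleGraph V} (hmin : IsMinTriang G H)
    {Om : Finset V} (hclique : H.IsClique (Om : Set V)) {u v : V}
    (hu : u ∈ Om) (hv : v ∈ Om) (huv : u ≠ v) (hGuv : ¬G.Adj u v) :
    ReachAvoid G (Om \ {u, v}) u v := by
  by_contra hcon
  set W : Finset V := Om \ {u, v} with hW
  set A : Set V := {x | x ∉ W ∧ ReachAvoid G W u x} with hA
  set B : Set V := {x | x ∉ A ∧ x ∉ W} with hB
  have hWu : u ∉ W := by simp [hW]
  have hWv : v ∉ W := by simp [hW]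
  have hWOm : ∀ w : V, w ∈ W → w ∈ Om := fun w hw => (Finset.mem_sdiff.mp hw).1
  have huA : u ∈ A := ⟨hWu, reach_refl hWu⟩
  have hvB : v ∈ B := ⟨fun h => hcon h.2, hWv⟩
  have hAW : ∀ w : V, w ∈ A → w ∉ W := fun w hw => hw.1
  have hBW : ∀ w : V, w ∈ B → w ∉ W := fun w hw => hw.2
  have hAB : ∀ w : V, w ∈ A → w ∉ B := fun w hw hw' => hw'.1 hw
  have htrich : ∀ w : V, w ∉ W → w ∉ A → w ∈ B := fun w h1 h2 => ⟨h2, h1⟩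
  have hclosure : ∀ a b : V, a ∈ A → G.Adj a b → b ∉ W → b ∈ A :=
    fun a b ha h hb => ⟨hb, reach_trans ha.2 (reach_adj h ha.1 hb)⟩
  set K : SimpleGraph V := cutG H A B with hK
  have hKH : K ≤ H := by intro x y h; exact h.1
  have hGK : G ≤ K := by
    intro x y h
    refine ⟨hmin.1.1 h, ?_, ?_⟩
    · rintro ⟨hxA, hyB⟩
      exact hAB y (hclosure x y hxA h (hBW y hyB)) hyB
    · rintro ⟨hxB, hyA⟩
      exact hAB x (hclosure y x hyA h.symm (hBW x hxB)) hxB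
  have cross : ∀ (a b : V) (p : K.Walk a b), a ∈ A → b ∈ B → ∃ w ∈ p.support, w ∈ W := by
    intro a b p
    induction p with
    | nil =>
      intro ha hb
      exact absurd ha hb.1
    | @cons a c b hadj q ih =>
      intro ha hb
      by_cases hcW : c ∈ W
      · exact ⟨c, by rw [Walk.support_cons]; exact List.mem_cons_of_mem _ q.start_mem_support,
          hcW⟩
      · have hcA : c ∈ A := by
          by_cases hcA' : c ∈ A
          · exact hcA'
          · exact absurd ⟨ha, htrich c hcW hcA'⟩ hadj.2.1
        obtain ⟨w, hw1, hw2⟩ := ih hcA hb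
        exact ⟨w, by rw [Walk.support_cons]; exact List.mem_cons_of_mem _ hw1, hw2⟩
  have hKchord : IsChordal K := by
    intro v0 κ hcyc hlen
    by_cases hsplit : (∃ a ∈ κ.support, a ∈ A) ∧ (∃ b ∈ κ.support, b ∈ B)
    · obtain ⟨⟨a, haκ, haA⟩, ⟨b, hbκ, hbB⟩⟩ := hsplit
      have hnn : ¬κ.Nil := by
        rw [Walk.nil_iff_length_eq]
        omega
      have hcyc₁ := hcyc.rotate haκ
      have hbrot : b ∈ (κ.rotate a haκ).support := (mem_support_rotate_iff hnn haκ).mpr hbκ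
      obtain ⟨w1, hw1T, hw1W⟩ := cross a b ((κ.rotate a haκ).takeUntil b hbrot) haA hbB
      obtain ⟨w2, hw2D, hw2W⟩ : ∃ w ∈ ((κ.rotate a haκ).dropUntil b hbrot).support, w ∈ W := by
        obtain ⟨w, hw, hwW⟩ := cross a b ((κ.rotate a haκ).dropUntil b hbrot).reverse haA hbB
        rw [Walk.support_reverse, List.mem_reverse] at hw
        exact ⟨w, hw, hwW⟩
      have hnodup₁ : (((κ.rotate a haκ).takeUntil b hbrot).append ((κ.rotate a haκ).dropUntil b hbrot)).support.tail.Nodup := by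
        rw [(κ.rotate a haκ).take_spec hbrot]
        exact hcyc₁.support_nodup
      have hw12 : w1 ≠ w2 := by
        intro h
        rcases eq_or_eq_of_mem_both_support hnodup₁ hw1T (h ▸ hw2D) with rfl | rfl
        · exact hAW w1 haA hw1W
        · exact hBW w1 hbB hw1W
      have hKw : K.Adj w1 w2 := by
        refine ⟨hclique (Finset.mem_coe.mpr (hWOm w1 hw1W)) (Finset.mem_coe.mpr (hWOm w2 hw2W))
          hw12, ?_, ?_⟩
        · rintro ⟨h1, _⟩; exact hAW w1 h1 hw1W
        · rintro ⟨h1, _⟩; exact hBW w1 h1 hw1W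
      have hEdge : s(w1, w2) ∉ κ.edges := by
        intro h
        have h₁ : s(w1, w2) ∈ (κ.rotate a haκ).edges := (κ.rotate_edges a haκ).mem_iff.mpr h
        rw [← (κ.rotate a haκ).take_spec hbrot, Walk.edges_append, List.mem_append] at h₁
        rcases h₁ with h₁ | h₁
        · have hw2T : w2 ∈ ((κ.rotate a haκ).takeUntil b hbrot).support :=
            Walk.snd_mem_support_of_mem_edges _ h₁
          rcases eq_or_eq_of_mem_both_support hnodup₁ hw2T hw2D with rfl | rfl
          · exact hAW w2 haA hw2W
          · exact hBW w2 hbB hw2W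
        · have hw1D : w1 ∈ ((κ.rotate a haκ).dropUntil b hbrot).support :=
            Walk.fst_mem_support_of_mem_edges _ h₁
          rcases eq_or_eq_of_mem_both_support hnodup₁ hw1T hw1D with rfl | rfl
          · exact hAW w1 haA hw1W
          · exact hBW w1 hbB hw1W
      refine ⟨w1, w2, ?_, ?_, hKw, hEdge⟩
      · exact (mem_support_rotate_iff hnn haκ).mp ((κ.rotate a haκ).support_takeUntil_subset hbrot hw1T)
      · exact (mem_support_rotate_iff hnn haκ).mp ((κ.rotate a haκ).support_dropUntil_subset hbrot hw2D)
    · rw [not_and_or] at hsplit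
      have hedges : ∀ e ∈ κ.edges, e ∈ H.edgeSet :=
        fun e he => edgeSet_mono hKH (κ.edges_subset_edgeSet he)
      obtain ⟨x, y, hx, hy, hxy, hne⟩ := hmin.1.2 v0 (κ.transfer H hedges)
        (hcyc.transfer hedges) (by rwa [Walk.length_transfer])
      rw [Walk.support_transfer] at hx hy
      rw [Walk.edges_transfer] at hne
      refine ⟨x, y, hx, hy, ⟨hxy, ?_, ?_⟩, hne⟩
      · rintro ⟨hxA, hyB⟩
        rcases hsplit with hs | hs
        · push_neg at hs; exact hs x hx hxA
        · push_neg at hs; exact hs y hy hyB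
      · rintro ⟨hxB, hyA⟩
        rcases hsplit with hs | hs
        · push_neg at hs; exact hs y hy hyA
        · push_neg at hs; exact hs x hx hxB
  have hKeq : K = H := hmin.2 K ⟨hGK, hKchord⟩ hKH
  have hHuv : H.Adj u v := hclique (Finset.mem_coe.mpr hu) (Finset.mem_coe.mpr hv) huv
  rw [← hKeq] at hHuv
  exact hHuv.2.1 ⟨huA, hvB⟩

/-- In a chordal graph, if every vertex of a clique `Ω` has a neighbour in a
connected set `C'` disjoint from `Ω`, then some vertex of `C'` is adjacent to
all of `Ω`. -/
lemma exists_dominating {V : Type} [Fintype V] [DecidableEq V] {H : SimpleGraph V}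
    (hchord : IsChordal H) {Om : Finset V} (hclique : H.IsClique (Om : Set V))
    {C' : Finset V} (hne : C'.Nonempty)
    (hdisj : ∀ x ∈ C', x ∉ Om)
    (hclosed : ∀ x ∈ C', ∀ y : V, H.Adj x y → y ∈ Om ∨ y ∈ C')
    (hconn : ∀ x ∈ C', ∀ y ∈ C', ReachAvoid H Om x y)
    (hfull : ∀ s ∈ Om, ∃ y ∈ C', H.Adj y s) :
    ∃ c ∈ C', ∀ s ∈ Om, H.Adj c s := by
  classical
  obtain ⟨c, hcC, hcmax⟩ := C'.exists_max_image
    (fun a : V => (Om.filter fun t => H.Adj a t).card) hne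
  by_contra hcon
  push_neg at hcon
  obtain ⟨s, hsOm, hsc⟩ := hcon c hcC
  have hsC' : s ∉ C' := fun h => hdisj s h hsOm
  have hs_ne_c : s ≠ c := fun h => hsC' (h ▸ hcC)
  have hsc' : ¬H.Adj s c := fun h => hsc h.symm
  -- walks avoiding `Om` starting in `C'` stay in `C'`
  have hwalkin : ∀ (a b : V) (q : H.Walk a b), a ∈ C' → (∀ z ∈ q.support, z ∉ Om) →
      ∀ z ∈ q.support, z ∈ C' := by
    intro a b q
    induction q with
    | nil =>
      intro ha _ z hz
      simp only [Walk.support_nil, List.mem_singleton] at hz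
      exact hz ▸ ha
    | @cons a d b hadj q ih =>
      intro ha hav z hz
      have hdsup : d ∈ (Walk.cons hadj q).support := by
        rw [Walk.support_cons]
        exact List.mem_cons_of_mem _ q.start_mem_support
      have hdC : d ∈ C' := by
        rcases hclosed a ha d hadj with hdo | hdC
        · exact absurd hdo (hav d hdsup)
        · exact hdC
      have hav' : ∀ w ∈ q.support, w ∉ Om := by
        intro w hw
        refine hav w ?_
        rw [Walk.support_cons]
        exact List.mem_cons_of_mem _ hw
      rcases List.mem_cons.mp ((Walk.support_cons hadj q) ▸ hz) with rfl | hz'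
      · exact ha
      · exact ih hdC hav' z hz'
  -- a "good" walk exists
  have hGoodEx : ∃ n : ℕ, ∃ p : H.Walk s c, (∀ z ∈ p.support, z = s ∨ z ∈ C') ∧ p.length = n := by
    obtain ⟨y, hyC, hys⟩ := hfull s hsOm
    obtain ⟨q, hq⟩ := hconn y hyC c hcC
    refine ⟨_, Walk.cons hys.symm q, ?_, rfl⟩
    intro z hz
    rcases List.mem_cons.mp ((Walk.support_cons _ q) ▸ hz) with rfl | hz'
    · exact Or.inl rfl
    · exact Or.inr (hwalkin y c q hyC hq z hz')
  obtain ⟨P₀, hP₀good, hP₀len⟩ := Nat.find_spec hGoodEx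
  set P : H.Walk s c := P₀.bypass with hPdef
  have hPp : P.IsPath := P₀.bypass_isPath
  have hPgood : ∀ z ∈ P.support, z = s ∨ z ∈ C' :=
    fun z hz => hP₀good z (P₀.support_bypass_subset hz)
  have hPmin : ∀ q : H.Walk s c, (∀ z ∈ q.support, z = s ∨ z ∈ C') → P.length ≤ q.length := by
    intro q hq
    calc P.length ≤ P₀.length := P₀.length_bypass_le
    _ = Nat.find hGoodEx := hP₀len
    _ ≤ q.length := Nat.find_le ⟨q, hq, rfl⟩
  have hlen2 : 2 ≤ P.length := by
    rcases Nat.lt_or_ge P.length 2 with h2 | h2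
    · have : P.length = 0 ∨ P.length = 1 := by omega
      rcases this with h | h
      · exact absurd (P.eq_of_length_eq_zero h) hs_ne_c
      · exact absurd (P.adj_of_mem_edges (edge_mem_of_length_one h)) hsc'
    · exact h2
  have hPnil : ¬P.Nil := by rw [Walk.nil_iff_length_eq]; omega
  set v1 : V := P.getVert 1 with hv1
  have hadj1 : H.Adj s v1 := P.adj_snd hPnil
  have hv1sup : v1 ∈ P.support := by
    have hct := P.cons_tail_eq hPnil
    rw [← hct, Walk.support_cons]
    exact List.mem_cons_of_mem _ P.tail.start_mem_support
  have hv1C : v1 ∈ C' := by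
    rcases hPgood v1 hv1sup with h | h
    · exact absurd (h ▸ hadj1) (H.loopless.irrefl _)
    · exact h
  -- no shortcuts in a minimal good walk
  have aux : ∀ (x y : V) (hx : x ∈ P.support), H.Adj x y →
      ∀ hy : y ∈ (P.dropUntil x hx).support, s(x, y) ∈ P.edges := by
    intro x y hx hadj hy
    by_contra he
    have hQgood : ∀ z ∈ ((P.takeUntil x hx).append
        (Walk.cons hadj ((P.dropUntil x hx).dropUntil y hy))).support, z = s ∨ z ∈ C' := by
      intro z hz
      rcases (Walk.mem_support_append_iff _ _).mp hz with hz' | hz'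
      · exact hPgood z (P.support_takeUntil_subset hx hz')
      · rcases List.mem_cons.mp ((Walk.support_cons _ _) ▸ hz') with rfl | hz''
        · exact hPgood z hx
        · exact hPgood z (P.support_dropUntil_subset hx
            ((P.dropUntil x hx).support_dropUntil_subset hy hz''))
    have hE2 : 2 ≤ ((P.dropUntil x hx).takeUntil y hy).length := by
      rcases Nat.lt_or_ge ((P.dropUntil x hx).takeUntil y hy).length 2 with h2 | h2
      · have : ((P.dropUntil x hx).takeUntil y hy).length = 0 ∨
            ((P.dropUntil x hx).takeUntil y hy).length = 1 := by omega
        rcases this with h | h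
        · exact absurd (((P.dropUntil x hx).takeUntil y hy).eq_of_length_eq_zero h) hadj.ne
        · refine absurd ?_ he
          have h1 : s(x, y) ∈ ((P.dropUntil x hx).takeUntil y hy).edges :=
            edge_mem_of_length_one h
          have h2 : s(x, y) ∈ (P.dropUntil x hx).edges :=
            (P.dropUntil x hx).edges_takeUntil_subset hy h1
          exact P.edges_dropUntil_subset hx h2
      · exact h2
    have hlenP : P.length = (P.takeUntil x hx).length
        + ((P.dropUntil x hx).takeUntil y hy).length
        + ((P.dropUntil x hx).dropUntil y hy).length := by
      have h1 := congrArg Walk.length (P.take_spec hx)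
      have h2 := congrArg Walk.length ((P.dropUntil x hx).take_spec hy)
      rw [Walk.length_append] at h1 h2
      omega
    have hlenQ : ((P.takeUntil x hx).append
        (Walk.cons hadj ((P.dropUntil x hx).dropUntil y hy))).length
        = (P.takeUntil x hx).length + ((P.dropUntil x hx).dropUntil y hy).length + 1 := by
      rw [Walk.length_append, Walk.length_cons]
      omega
    have := hPmin _ hQgood
    omega
  have key : ∀ x y : V, x ∈ P.support → y ∈ P.support → H.Adj x y → s(x, y) ∈ P.edges := by
    intro x y hx hy hadj
    by_cases h1 : y ∈ (P.dropUntil x hx).support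
    · exact aux x y hx hadj h1
    by_cases h2 : x ∈ (P.dropUntil y hy).support
    · rw [Sym2.eq_swap]; exact aux y x hy hadj.symm h2
    exfalso
    have hyT : y ∈ (P.takeUntil x hx).support := by
      have := hy
      rw [← P.take_spec hx, Walk.mem_support_append_iff] at this
      tauto
    have hxT : x ∈ (P.takeUntil y hy).support := by
      have := hx
      rw [← P.take_spec hy, Walk.mem_support_append_iff] at this
      tauto
    have l1 : (P.takeUntil y hy).length < (P.takeUntil x hx).length :=
      length_takeUntil_lt_of_mem P x hx y hyT hadj.ne.symm hy
    have l2 : (P.takeUntil x hx).length < (P.takeUntil y hy).length :=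
      length_takeUntil_lt_of_mem P y hy x hxT hadj.ne hx
    omega
  -- find `s'` adjacent to `c` but not to `v1`
  have hs'ex : ∃ s' ∈ Om, H.Adj c s' ∧ ¬H.Adj v1 s' := by
    by_contra hno
    push_neg at hno
    have hsub : insert s (Om.filter fun t => H.Adj c t) ⊆ Om.filter fun t => H.Adj v1 t := by
      intro t ht
      rcases Finset.mem_insert.mp ht with rfl | ht'
      · exact Finset.mem_filter.mpr ⟨hsOm, hadj1.symm⟩
      · have := Finset.mem_filter.mp ht'
        exact Finset.mem_filter.mpr ⟨this.1, hno t this.1 this.2⟩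
    have hcard := Finset.card_le_card hsub
    have hsnot : s ∉ Om.filter fun t => H.Adj c t := by
      intro h
      exact hsc (Finset.mem_filter.mp h).2
    rw [Finset.card_insert_of_notMem hsnot] at hcard
    have := hcmax v1 hv1C
    omega
  obtain ⟨s', hs'Om, hcs', hv1s'⟩ := hs'ex
  have hs'ne_s : s' ≠ s := fun h => hsc (h ▸ hcs')
  have hs'nC : s' ∉ C' := fun h => hdisj s' h hs'Om
  have hs'nP : s' ∉ P.support := by
    intro h
    rcases hPgood s' h with h' | h'
    exacts [hs'ne_s h', hs'nC h']
  -- the set of support vertices adjacent to `s'`, other than `s`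
  set ℓ : V → ℕ := fun z => if hz : z ∈ P.support then (P.takeUntil z hz).length else 0 with hℓ
  have hTne : c ∈ Finset.univ.filter
      (fun t => t ∈ P.support ∧ H.Adj s' t ∧ t ≠ s) := by
    refine Finset.mem_filter.mpr ⟨Finset.mem_univ _, P.end_mem_support, hcs'.symm, ?_⟩
    exact fun h => hs_ne_c h.symm
  obtain ⟨t, htT, htmin⟩ := Finset.exists_min_image _ ℓ ⟨c, hTne⟩
  obtain ⟨-, htP, hadj_s't, ht_ne_s⟩ := Finset.mem_filter.mp htT
  set Q := P.takeUntil t htP with hQ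
  have hQpath : Q.IsPath := hPp.takeUntil htP
  have ht_ne_v1 : t ≠ v1 := by
    intro h
    exact hv1s' (h ▸ hadj_s't).symm
  have hQsubP : ∀ z ∈ Q.support, z ∈ P.support := fun z hz =>
    P.support_takeUntil_subset htP hz
  have hQlen : 2 ≤ Q.length := by
    rcases Nat.lt_or_ge Q.length 2 with h2 | h2
    · have : Q.length = 0 ∨ Q.length = 1 := by omega
      rcases this with h | h
      · exact absurd (Q.eq_of_length_eq_zero h).symm ht_ne_s
      · exfalso
        apply ht_ne_v1
        have hgv : P.getVert 1 = t := by
          have h' : (P.takeUntil t htP).length = 1 := by rw [← hQ]; exact h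
          conv_lhs => rw [← P.take_spec htP]
          rw [Walk.getVert_append, h']
          simp
        rw [hv1, hgv]
    · exact h2
  have hs'Q : s' ∉ Q.support := fun h => hs'nP (hQsubP _ h)
  -- build the chordless cycle  s' - s - ... - t - s'
  have hq₁path : (Q.concat hadj_s't.symm).IsPath := by
    rw [← Walk.isPath_reverse_iff, Walk.reverse_concat, Walk.cons_isPath_iff]
    refine ⟨hQpath.reverse, ?_⟩
    rw [Walk.support_reverse, List.mem_reverse]
    exact hs'Q
  have hedge_nq : s(s', s) ∉ (Q.concat hadj_s't.symm).edges := by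
    rw [Walk.edges_concat, List.concat_eq_append]
    intro hmem
    rcases List.mem_append.mp hmem with h | h
    all_goals try (rw [List.mem_singleton] at h)
    · exact hs'Q (Walk.fst_mem_support_of_mem_edges _ h)
    · simp only [Sym2.eq, Sym2.rel_iff', Prod.mk.injEq, Prod.swap_prod_mk] at h
      rcases h with ⟨h1, h2⟩ | ⟨h1, h2⟩
      · exact hs'ne_s h2.symm
      · exact ht_ne_s h2.symm
  have hadj_s's : H.Adj s' s :=
    hclique (Finset.mem_coe.mpr hs'Om) (Finset.mem_coe.mpr hsOm) hs'ne_s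
  have hκcyc : (Walk.cons hadj_s's (Q.concat hadj_s't.symm)).IsCycle :=
    SimpleGraph.Path.cons_isCycle ⟨Q.concat hadj_s't.symm, hq₁path⟩ hadj_s's hedge_nq
  have hκlen : 4 ≤ (Walk.cons hadj_s's (Q.concat hadj_s't.symm)).length := by
    rw [Walk.length_cons, Walk.length_concat]
    omega
  obtain ⟨x, y, hxκ, hyκ, hadjxy, hxyE⟩ := hchord s' _ hκcyc hκlen
  have memκ : ∀ z : V, z ∈ (Walk.cons hadj_s's (Q.concat hadj_s't.symm)).support ↔
      z = s' ∨ z ∈ Q.support := by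
    intro z
    rw [Walk.support_cons, List.mem_cons, Walk.support_concat,
      List.mem_append, List.mem_singleton]
    tauto
  have hQedgeκ : ∀ e, e ∈ Q.edges → e ∈ (Walk.cons hadj_s's (Q.concat hadj_s't.symm)).edges := by
    intro e he
    rw [Walk.edges_cons, List.mem_cons, Walk.edges_concat, List.concat_eq_append,
      List.mem_append, List.mem_singleton]
    tauto
  have hedge1 : s(s', s) ∈ (Walk.cons hadj_s's (Q.concat hadj_s't.symm)).edges := by
    rw [Walk.edges_cons]
    exact List.mem_cons_self
  have hedge2 : s(t, s') ∈ (Walk.cons hadj_s's (Q.concat hadj_s't.symm)).edges := by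
    rw [Walk.edges_cons, List.mem_cons, Walk.edges_concat, List.concat_eq_append,
      List.mem_append, List.mem_singleton]
    tauto
  -- analyse the chord
  have hs'case : ∀ w : V, w ∈ Q.support → H.Adj s' w →
      s(s', w) ∈ (Walk.cons hadj_s's (Q.concat hadj_s't.symm)).edges := by
    intro w hwQ hadjw
    by_cases hws : w = s
    · subst hws; exact hedge1
    by_cases hwt : w = t
    · subst hwt; rw [Sym2.eq_swap]; exact hedge2
    exfalso
    have hwT : w ∈ Finset.univ.filter (fun z => z ∈ P.support ∧ H.Adj s' z ∧ z ≠ s) :=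
      Finset.mem_filter.mpr ⟨Finset.mem_univ _, hQsubP w hwQ, hadjw, hws⟩
    have hmin := htmin w hwT
    have hlt : ℓ w < ℓ t := by
      have hwP : w ∈ P.support := hQsubP w hwQ
      rw [hℓ]
      simp only [dif_pos hwP, dif_pos htP]
      exact length_takeUntil_lt_of_mem P t htP w hwQ hwt hwP
    omega
  rcases (memκ x).mp hxκ with rfl | hxQ <;> rcases (memκ y).mp hyκ with rfl | hyQ
  · exact H.loopless.irrefl _ hadjxy
  · exact hxyE (hs'case y hyQ hadjxy)
  · exact hxyE (by rw [Sym2.eq_swap]; exact hs'case x hxQ hadjxy.symm)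
  · have hPedge : s(x, y) ∈ P.edges := key x y (hQsubP x hxQ) (hQsubP y hyQ) hadjxy
    have hnodupP : ((P.takeUntil t htP).append (P.dropUntil t htP)).support.Nodup := by
      rw [P.take_spec htP]
      exact hPp.support_nodup
    rw [← P.take_spec htP, Walk.edges_append, List.mem_append] at hPedge
    rcases hPedge with h | h
    · exact hxyE (hQedgeκ _ h)
    · have hxD : x ∈ (P.dropUntil t htP).support := Walk.fst_mem_support_of_mem_edges _ h
      have hyD : y ∈ (P.dropUntil t htP).support := Walk.snd_mem_support_of_mem_edges _ h
      have hxt : x = t := eq_of_mem_both_support hnodupP hxQ hxD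
      have hyt : y = t := eq_of_mem_both_support hnodupP hyQ hyD
      exact hadjxy.ne (hxt.trans hyt.symm)

end Aux

/-- every block associated with a potential maximal clique `Ω`
of a (connected) graph `G` is a full block: for every component `C` of `G - Ω`,
the set `N(C)` is a minimal separator of `G` and `C` is a full component of
`G - N(C)`.  (Connectivity is the standing assumption of the cited source.) -/
theorem stmt13 {V : Type} [Fintype V] [DecidableEq V] (G : SimpleGraph V)
    (hconn : G.Connected) (Omega : Finset V) (hOmega : IsPMC G Omega)
    (C : Finset V) (hC : IsCompAvoid G Omega C) :
    IsMinSep G (nbhd G C) ∧ IsCompAvoid G (nbhd G C) C ∧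
      nbhdSet G C = (nbhd G C : Set V) := by
  classical
  obtain ⟨H, hmin, hmax⟩ := hOmega
  obtain ⟨hcliqueH, hmaxclique⟩ := hmax
  have hGH : G ≤ H := hmin.1.1
  have hchordH : IsChordal H := hmin.1.2
  obtain ⟨hCne, hCdisj, hCconn, hCclose⟩ := hC
  have hmemS : ∀ z : V, z ∈ nbhd G C ↔ (z ∉ C ∧ ∃ u ∈ C, G.Adj u z) := by
    intro z
    simp [nbhd]
  have hSC : ∀ z ∈ C, z ∉ nbhd G C := fun z hz h => ((hmemS z).mp h).1 hz
  have hSOm : ∀ z ∈ nbhd G C, z ∈ Omega := by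
    intro z hz
    obtain ⟨hzC, u, huC, hadj⟩ := (hmemS z).mp hz
    by_contra hzo
    exact hzC (hCclose u huC z hzo (reach_adj hadj (hCdisj u huC) hzo))
  have hstay : ∀ (x y : V) (p : G.Walk x y), x ∈ C →
      (∀ z ∈ p.support, z ∉ nbhd G C) → y ∈ C := by
    intro x y p
    induction p with
    | nil => intro h _; exact h
    | @cons a d b hadj q ih =>
      intro ha hsup
      have hdsup : d ∈ (SimpleGraph.Walk.cons hadj q).support := by
        rw [SimpleGraph.Walk.support_cons]
        exact List.mem_cons_of_mem _ q.start_mem_support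
      have hdC : d ∈ C := by
        by_contra hdC
        exact hsup d hdsup ((hmemS d).mpr ⟨hdC, a, ha, hadj⟩)
      refine ih hdC ?_
      intro z hz
      refine hsup z ?_
      rw [SimpleGraph.Walk.support_cons]
      exact List.mem_cons_of_mem _ hz
  have h3 : nbhdSet G C = ((nbhd G C : Finset V) : Set V) := by
    ext z
    simp [nbhdSet, nbhd]
  have h2 : IsCompAvoid G (nbhd G C) C := by
    refine ⟨hCne, hSC, ?_, ?_⟩
    · intro x hx y hy
      exact reach_mono (fun z hz => hSOm z hz) (hCconn x hx y hy)
    · intro x hx y _ hr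
      obtain ⟨p, hp⟩ := hr
      exact hstay x y p hx hp
  obtain ⟨c0, hc0⟩ := hCne
  have hmemC' : ∀ z : V, z ∈ (Finset.univ.filter
      (fun y => y ∉ Omega ∧ ReachAvoid H Omega c0 y) : Finset V) ↔
      (z ∉ Omega ∧ ReachAvoid H Omega c0 z) := by
    intro z
    simp
  have hCsubC' : ∀ z ∈ C, z ∈ (Finset.univ.filter
      (fun y => y ∉ Omega ∧ ReachAvoid H Omega c0 y) : Finset V) := by
    intro z hz
    exact (hmemC' z).mpr ⟨hCdisj z hz, reach_le hGH (hCconn c0 hc0 z hz)⟩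
  have hx0 : ∃ x₀ ∈ Omega, x₀ ∉ nbhd G C := by
    by_contra hno
    push_neg at hno
    have hd1 : ∀ x ∈ (Finset.univ.filter
        (fun y => y ∉ Omega ∧ ReachAvoid H Omega c0 y) : Finset V), x ∉ Omega :=
      fun x hx => ((hmemC' x).mp hx).1
    have hd2 : ∀ x ∈ (Finset.univ.filter
        (fun y => y ∉ Omega ∧ ReachAvoid H Omega c0 y) : Finset V),
        ∀ y : V, H.Adj x y → y ∈ Omega ∨ y ∈ (Finset.univ.filter
        (fun y => y ∉ Omega ∧ ReachAvoid H Omega c0 y) : Finset V) := by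
      intro x hx y hadj
      by_cases hy : y ∈ Omega
      · exact Or.inl hy
      · exact Or.inr ((hmemC' y).mpr ⟨hy,
          reach_trans ((hmemC' x).mp hx).2 (reach_adj hadj (hd1 x hx) hy)⟩)
    have hd3 : ∀ x ∈ (Finset.univ.filter
        (fun y => y ∉ Omega ∧ ReachAvoid H Omega c0 y) : Finset V),
        ∀ y ∈ (Finset.univ.filter
        (fun y => y ∉ Omega ∧ ReachAvoid H Omega c0 y) : Finset V),
        ReachAvoid H Omega x y := by
      intro x hx y hy
      exact reach_trans (reach_symm ((hmemC' x).mp hx).2) ((hmemC' y).mp hy).2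
    have hd4 : ∀ s ∈ Omega, ∃ y ∈ (Finset.univ.filter
        (fun y => y ∉ Omega ∧ ReachAvoid H Omega c0 y) : Finset V), H.Adj y s := by
      intro s hs
      obtain ⟨_, u, huC, hadj⟩ := (hmemS s).mp (hno s hs)
      exact ⟨u, hCsubC' u huC, hGH hadj⟩
    obtain ⟨c, hcC', hcdom⟩ := exists_dominating hchordH hcliqueH
      ⟨c0, hCsubC' c0 hc0⟩ hd1 hd2 hd3 hd4
    have hclique' : H.IsClique ((insert c Omega : Finset V) : Set V) := by
      rw [Finset.coe_insert]
      exact hcliqueH.insert (fun b hb _ => hcdom b hb)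
    have heq := hmaxclique (insert c Omega) hclique' (Finset.subset_insert _ _)
    have hcOm : c ∈ Omega := by
      rw [heq]
      exact Finset.mem_insert_self _ _
    exact hd1 c hcC' hcOm
  obtain ⟨x₀, hx₀Om, hx₀S⟩ := hx0
  have hx₀C : x₀ ∉ C := fun h => hCdisj x₀ h hx₀Om
  have h1 : IsMinSep G (nbhd G C) := by
    refine ⟨c0, x₀, ?_, ?_, ⟨hSC c0 hc0, hx₀S, ?_⟩, ?_⟩
    · intro h
      exact hx₀C (h ▸ hc0)
    · intro h
      exact hx₀S ((hmemS x₀).mpr ⟨hx₀C, c0, hc0, h⟩)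
    · rintro ⟨p, hp⟩
      exact hx₀C (hstay _ _ p hc0 hp)
    · rintro S' hS' ⟨hu, hx, hnr⟩
      obtain ⟨s, hsS, hsS'⟩ := Finset.exists_of_ssubset hS'
      have hS'S : S' ⊆ nbhd G C := hS'.subset
      have hS'sub : ∀ z ∈ S', z ∈ Omega ∧ z ≠ s ∧ z ≠ x₀ := by
        intro z hz
        refine ⟨hSOm z (hS'S hz), ?_, ?_⟩
        · intro h; exact hsS' (h ▸ hz)
        · intro h; exact hx₀S (hS'S (h ▸ hz))
      apply hnr
      obtain ⟨hsC, cs, hcsC, hcs_adj⟩ := (hmemS s).mp hsS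
      have r1 : ReachAvoid G S' c0 cs :=
        reach_mono (fun z hz => (hS'sub z hz).1) (hCconn c0 hc0 cs hcsC)
      have r2 : ReachAvoid G S' cs s :=
        reach_adj hcs_adj (fun h => hSC cs hcsC (hS'S h)) hsS'
      have r3 : ReachAvoid G S' s x₀ := by
        by_cases hadj : G.Adj s x₀
        · exact reach_adj hadj hsS' (fun h => hx₀S (hS'S h))
        · have hsx : s ≠ x₀ := fun h => hx₀S (h ▸ hsS)
          have hreach := cliquish hmin hcliqueH (hSOm s hsS) hx₀Om hsx hadj
          refine reach_mono ?_ hreach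
          intro z hz
          rw [Finset.mem_sdiff]
          refine ⟨(hS'sub z hz).1, ?_⟩
          simp only [Finset.mem_insert, Finset.mem_singleton]
          push_neg
          exact ⟨(hS'sub z hz).2.1, (hS'sub z hz).2.2⟩
      exact reach_trans (reach_trans r1 r2) r3
  exact ⟨h1, h2, h3⟩
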